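/- Let N ≥ 2 and let Γ_1,…,Γ_{N−1} ∈ (0,1]. Define the symmetric (N−1)×(N−1) real matrix Ĥ by Ĥ_{a,b} = ∑_{i=1}^{a} ∑_{j=b}^{N−1} ∏_{k=i}^{j} Γ_k for a ≤ b, and Ĥ_{a,b} = Ĥ_{b,a} for a > b. Then Ĥ is positive semidefinite. -/

import Mathlib

open Finset

noncomputable section HessAux

def Hcc (Γ : ℕ → ℝ) (i : ℕ) : ℝ := ∏ k ∈ Finset.Icc 1 i, Γ k

def Hff (Γ : ℕ → ℝ) (a : ℕ) : ℝ := ∑ t ∈ Finset.range (a + 1), (Hcc Γ t)⁻¹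

def Hgg (m : ℕ) (Γ : ℕ → ℝ) (b : ℕ) : ℝ := ∑ j ∈ Finset.Icc (b + 1) m, Hcc Γ j

def Hhh (m : ℕ) (Γ : ℕ → ℝ) (t : ℕ) : ℝ := Hff Γ t / Hgg m Γ t

def Hdd (m : ℕ) (Γ : ℕ → ℝ) (t : ℕ) : ℝ :=
  if t = 0 then Hhh m Γ 0 else Hhh m Γ t - Hhh m Γ (t - 1)

theorem Hcc_pos {m : ℕ} {Γ : ℕ → ℝ} (hΓ : ∀ k, 1 ≤ k → k ≤ m → 0 < Γ k)
    {i : ℕ} (hi : i ≤ m) : 0 < Hcc Γ i := by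
  apply Finset.prod_pos
  intro k hk
  simp only [Finset.mem_Icc] at hk
  exact hΓ k hk.1 (hk.2.trans hi)

theorem Hcc_Ioc (Γ : ℕ → ℝ) (i : ℕ) : Hcc Γ i = ∏ k ∈ Finset.Ioc 0 i, Γ k := by
  rw [Hcc, ← Finset.Icc_add_one_left_eq_Ioc, zero_add]

theorem Hff_pos {m : ℕ} {Γ : ℕ → ℝ} (hΓ : ∀ k, 1 ≤ k → k ≤ m → 0 < Γ k)
    {a : ℕ} (ha : a ≤ m) : 0 < Hff Γ a := by
  apply Finset.sum_pos
  · intro t ht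
    simp only [Finset.mem_range] at ht
    exact inv_pos.2 (Hcc_pos hΓ (by omega))
  · exact ⟨0, by simp⟩

theorem Hgg_pos {m : ℕ} {Γ : ℕ → ℝ} (hΓ : ∀ k, 1 ≤ k → k ≤ m → 0 < Γ k)
    {b : ℕ} (hb : b < m) : 0 < Hgg m Γ b := by
  apply Finset.sum_pos
  · intro j hj
    simp only [Finset.mem_Icc] at hj
    exact Hcc_pos hΓ hj.2
  · exact ⟨m, by simp [Finset.mem_Icc]; omega⟩

theorem Hff_succ (Γ : ℕ → ℝ) (t : ℕ) : Hff Γ (t + 1) = Hff Γ t + (Hcc Γ (t + 1))⁻¹ := by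
  rw [Hff, Finset.sum_range_succ, Hff]

theorem Hgg_succ {m : ℕ} {Γ : ℕ → ℝ} {t : ℕ} (ht : t + 1 ≤ m) :
    Hgg m Γ t = Hcc Γ (t + 1) + Hgg m Γ (t + 1) := by
  rw [Hgg, ← Finset.Ioc_insert_left ht, Finset.sum_insert (by simp)]
  congr 1
  rw [Hgg, ← Finset.Icc_add_one_left_eq_Ioc]

theorem Hdd_nonneg {m : ℕ} {Γ : ℕ → ℝ} (hΓ : ∀ k, 1 ≤ k → k ≤ m → 0 < Γ k)
    {t : ℕ} (ht : t < m) : 0 ≤ Hdd m Γ t := by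
  rcases Nat.eq_zero_or_pos t with h0 | h0
  · subst h0
    rw [Hdd, if_pos rfl, Hhh]
    exact le_of_lt (div_pos (Hff_pos hΓ (by omega)) (Hgg_pos hΓ (by omega)))
  · obtain ⟨s, rfl⟩ : ∃ s, t = s + 1 := ⟨t - 1, by omega⟩
    rw [Hdd, if_neg (by omega), sub_nonneg]
    simp only [Nat.add_sub_cancel]
    have hgs : 0 < Hgg m Γ s := Hgg_pos hΓ (by omega)
    have hgs1 : 0 < Hgg m Γ (s + 1) := Hgg_pos hΓ ht
    rw [Hhh, Hhh, div_le_div_iff₀ hgs hgs1]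
    rw [Hff_succ, Hgg_succ (t := s) (by omega)]
    have hfs : 0 < Hff Γ s := Hff_pos hΓ (by omega)
    have hcs : 0 < Hcc Γ (s + 1) := Hcc_pos hΓ (le_of_lt ht)
    have hcs' : 0 < (Hcc Γ (s + 1))⁻¹ := inv_pos.2 hcs
    nlinarith [mul_pos hcs' hgs1, mul_pos hfs hcs, inv_mul_cancel₀ (ne_of_gt hcs)]

theorem Hdd_telescope (m : ℕ) (Γ : ℕ → ℝ) (s : ℕ) :
    ∑ t ∈ Finset.range (s + 1), Hdd m Γ t = Hhh m Γ s := by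
  induction s with
  | zero => simp [Hdd]
  | succ n ih =>
      rw [Finset.sum_range_succ, ih, Hdd, if_neg (by omega)]
      simp

theorem entry_eq {m : ℕ} {Γ : ℕ → ℝ} (hΓ : ∀ k, 1 ≤ k → k ≤ m → 0 < Γ k)
    {a b : ℕ} (ha : a < m) (hab : a ≤ b) (hb : b < m) :
    (∑ i ∈ Finset.Icc 1 (a + 1), ∑ j ∈ Finset.Icc (b + 1) m, ∏ k ∈ Finset.Icc i j, Γ k)
      = Hff Γ a * Hgg m Γ b := by
  have step : ∀ i ∈ Finset.Icc 1 (a + 1), ∀ j ∈ Finset.Icc (b + 1) m,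
      (∏ k ∈ Finset.Icc i j, Γ k) = (Hcc Γ (i - 1))⁻¹ * Hcc Γ j := by
    intro i hi j hj
    simp only [Finset.mem_Icc] at hi hj
    have h1 : i - 1 ≤ j := by omega
    have h2 : (∏ k ∈ Finset.Ioc 0 (i-1), Γ k) * ∏ k ∈ Finset.Ioc (i-1) j, Γ k
        = ∏ k ∈ Finset.Ioc 0 j, Γ k := Finset.prod_Ioc_consecutive Γ (by omega) h1
    have h3 : Finset.Icc i j = Finset.Ioc (i - 1) j := by
      rw [← Finset.Icc_add_one_left_eq_Ioc]; congr 1; omega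
    have hcne : (∏ k ∈ Finset.Ioc 0 (i-1), Γ k) ≠ 0 := by
      rw [← Hcc_Ioc]; exact ne_of_gt (Hcc_pos hΓ (by omega))
    rw [h3, Hcc_Ioc Γ (i-1), Hcc_Ioc Γ j, ← h2, inv_mul_cancel_left₀ hcne]
  rw [Finset.sum_congr rfl (fun i hi => Finset.sum_congr rfl (step i hi))]
  simp only [← Finset.sum_mul, ← Finset.mul_sum]
  congr 1
  rw [Hff, ← Finset.Ico_add_one_right_eq_Icc, Finset.sum_Ico_eq_sum_range]
  simp

end HessAux

/-- with `m = N - 1 ≥ 1` and `Γ_1, …, Γ_m ∈ (0,1]`, the symmetric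
`m × m` matrix with entries `Ĥ_{a,b} = ∑_{i=1}^{a} ∑_{j=b}^{m} ∏_{k=i}^{j} Γ_k`
for `a ≤ b` (paper's 1-based indices; here `a b : Fin m` are 0-based, so the
paper index is `a.val + 1`) is positive semidefinite. -/
theorem hessian_matrix_posSemidef (m : ℕ) (hm : 1 ≤ m) (Γ : ℕ → ℝ)
    (hΓ : ∀ k, 1 ≤ k → k ≤ m → Γ k ∈ Set.Ioc (0 : ℝ) 1) :
    Matrix.PosSemidef (Matrix.of fun a b : Fin m =>
      if a ≤ b then
        ∑ i ∈ Finset.Icc 1 (a.val + 1), ∑ j ∈ Finset.Icc (b.val + 1) m,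
          ∏ k ∈ Finset.Icc i j, Γ k
      else
        ∑ i ∈ Finset.Icc 1 (b.val + 1), ∑ j ∈ Finset.Icc (a.val + 1) m,
          ∏ k ∈ Finset.Icc i j, Γ k) := by
  have hΓ' : ∀ k, 1 ≤ k → k ≤ m → 0 < Γ k := fun k h1 h2 => (hΓ k h1 h2).1
  set A : Matrix (Fin m) (Fin m) ℝ := Matrix.of fun t a : Fin m =>
    Real.sqrt (Hdd m Γ t.val) * (if t.val ≤ a.val then Hgg m Γ a.val else 0) with hA
  have key : ∀ a b : Fin m, a.val ≤ b.val →
      (A.conjTranspose * A) a b = Hff Γ a.val * Hgg m Γ b.val := by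
    intro a b hab
    rw [Matrix.mul_apply]
    simp only [Matrix.conjTranspose_apply, hA, Matrix.of_apply, star_trivial]
    have hterm : ∀ t : Fin m,
        (Real.sqrt (Hdd m Γ t.val) * (if t.val ≤ a.val then Hgg m Γ a.val else 0)) *
        (Real.sqrt (Hdd m Γ t.val) * (if t.val ≤ b.val then Hgg m Γ b.val else 0))
        = if t.val ≤ a.val then Hdd m Γ t.val * (Hgg m Γ a.val * Hgg m Γ b.val) else 0 := by
      intro t
      by_cases h : t.val ≤ a.val
      · rw [if_pos h, if_pos h, if_pos (h.trans hab)]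
        have : Real.sqrt (Hdd m Γ t.val) * Real.sqrt (Hdd m Γ t.val) = Hdd m Γ t.val :=
          Real.mul_self_sqrt (Hdd_nonneg hΓ' t.isLt)
        rw [mul_mul_mul_comm, this]
      · rw [if_neg h, if_neg h]; ring
    rw [Finset.sum_congr rfl (fun t _ => hterm t)]
    rw [Fin.sum_univ_eq_sum_range
      (fun t => if t ≤ a.val then Hdd m Γ t * (Hgg m Γ a.val * Hgg m Γ b.val) else 0) m]
    rw [← Finset.sum_filter]
    have hfil : (Finset.range m).filter (· ≤ a.val) = Finset.range (a.val + 1) := by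
      ext t
      simp only [Finset.mem_filter, Finset.mem_range]
      constructor
      · rintro ⟨_, h2⟩; omega
      · intro h; exact ⟨by omega, by omega⟩
    rw [hfil, ← Finset.sum_mul, Hdd_telescope, Hhh]
    have hga : Hgg m Γ a.val ≠ 0 := ne_of_gt (Hgg_pos hΓ' a.isLt)
    field_simp
  have hsymm : ∀ a b : Fin m, (A.conjTranspose * A) a b = (A.conjTranspose * A) b a := by
    intro a b
    rw [Matrix.mul_apply, Matrix.mul_apply]
    exact Finset.sum_congr rfl fun t _ => by
      simp only [Matrix.conjTranspose_apply, star_trivial]; ring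
  have hEq : (Matrix.of fun a b : Fin m =>
      if a ≤ b then
        ∑ i ∈ Finset.Icc 1 (a.val + 1), ∑ j ∈ Finset.Icc (b.val + 1) m,
          ∏ k ∈ Finset.Icc i j, Γ k
      else
        ∑ i ∈ Finset.Icc 1 (b.val + 1), ∑ j ∈ Finset.Icc (a.val + 1) m,
          ∏ k ∈ Finset.Icc i j, Γ k) = A.conjTranspose * A := by
    ext a b
    simp only [Matrix.of_apply]
    by_cases hab : a ≤ b
    · rw [if_pos hab, key a b hab, entry_eq hΓ' a.isLt hab b.isLt]
    · have hba : b.val ≤ a.val := le_of_not_ge hab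
      rw [if_neg hab, hsymm a b, key b a hba, entry_eq hΓ' b.isLt hba a.isLt]
  rw [hEq]
  exact Matrix.posSemidef_conjTranspose_mul_self A
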